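/- Let H be the Hilbert space ℓ² of square-summable complex sequences indexed by ℕ with standard orthonormal basis (e_k). Let a : ℤ → ℝ be finitely supported with a(−k) = a(k) for all k, and suppose there exists c > 0 such that a(0) + 2·Σ_{k≥1} a(k)·cos(kθ) ≥ c for all θ ∈ ℝ. If T : H → H is a continuous linear operator with matrix entries ⟨T e_n, e_m⟩ = a(m−n) for all m, n ∈ ℕ, then Re⟨T u, u⟩ ≥ c·‖u‖² for all u ∈ H, and T admits a continuous linear two-sided inverse. -/

import Mathlib

open scoped ComplexInnerProductSpace BigOperators

section ToeplitzAux

open Complex Real Finset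

set_option maxHeartbeats 1000000

private lemma integral_exp_int (k : ℤ) :
    ∫ θ in (0:ℝ)..(2*Real.pi), Complex.exp (k * θ * Complex.I)
      = if k = 0 then (2*Real.pi : ℂ) else 0 := by
  rcases eq_or_ne k 0 with hk | hk
  · simp [hk]
  · rw [if_neg hk]
    have h1 : ∀ θ : ℝ, (k:ℂ) * θ * Complex.I = (k * Complex.I) * θ := fun θ => by ring
    simp_rw [h1]
    rw [integral_exp_mul_complex (by simp [hk, Complex.I_ne_zero])]
    have : Complex.exp ((k:ℂ) * Complex.I * (2*Real.pi : ℝ)) = 1 := by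
      rw [show ((k:ℂ) * Complex.I * (2*Real.pi : ℝ)) = k * (2 * Real.pi * Complex.I) by push_cast; ring]
      exact Complex.exp_int_mul_two_pi_mul_I k
    rw [this]; simp

private lemma integral_symbol_mul (a : ℤ → ℝ) (K : Finset ℤ) (haK : ∀ k ∉ K, a k = 0)
    (s : Finset ℕ) (x : ℕ → ℂ) :
    ∫ θ in (0:ℝ)..(2*Real.pi),
      (∑ k ∈ K, (a k : ℂ) * Complex.exp (k*θ*Complex.I)) *
      ((starRingEnd ℂ) (∑ n ∈ s, x n * Complex.exp (n*θ*Complex.I)) *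
       (∑ m ∈ s, x m * Complex.exp (m*θ*Complex.I)))
    = (2*Real.pi : ℂ) * ∑ n ∈ s, ∑ m ∈ s,
        (a ((n:ℤ) - m) : ℂ) * ((starRingEnd ℂ) (x n) * x m) := by
  have hconj : ∀ θ : ℝ, (starRingEnd ℂ) (∑ n ∈ s, x n * Complex.exp (n*θ*Complex.I))
      = ∑ n ∈ s, (starRingEnd ℂ) (x n) * Complex.exp ((-(n:ℤ))*θ*Complex.I) := by
    intro θ
    rw [map_sum]
    refine Finset.sum_congr rfl fun n _ => ?_
    rw [map_mul, ← Complex.exp_conj]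
    congr 1
    simp [Complex.conj_I]
  have hexpand : ∀ θ : ℝ,
      (∑ k ∈ K, (a k : ℂ) * Complex.exp (k*θ*Complex.I)) *
      ((starRingEnd ℂ) (∑ n ∈ s, x n * Complex.exp (n*θ*Complex.I)) *
       (∑ m ∈ s, x m * Complex.exp (m*θ*Complex.I)))
      = ∑ n ∈ s, ∑ m ∈ s, ∑ k ∈ K,
          ((a k : ℂ) * ((starRingEnd ℂ) (x n) * x m)) *
            Complex.exp ((k - n + m : ℤ)*θ*Complex.I) := by
    intro θ
    rw [hconj θ, Finset.sum_mul_sum, Finset.mul_sum]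
    refine Finset.sum_congr rfl fun n _ => ?_
    rw [Finset.mul_sum]
    refine Finset.sum_congr rfl fun m _ => ?_
    rw [Finset.sum_mul]
    refine Finset.sum_congr rfl fun k _ => ?_
    have h2 : ((k - n + m : ℤ) : ℂ)*θ*Complex.I
        = (k:ℂ)*θ*Complex.I + ((-(n:ℤ) : ℤ):ℂ)*θ*Complex.I + (m:ℂ)*θ*Complex.I := by
      push_cast; ring
    rw [h2, Complex.exp_add, Complex.exp_add]
    push_cast
    ring
  simp only [hexpand]
  have hcont : ∀ (c : ℂ) (j : ℤ), Continuous fun θ : ℝ => c * Complex.exp (j*θ*Complex.I) := by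
    intro c j
    fun_prop
  rw [intervalIntegral.integral_finset_sum (fun n _ => Continuous.intervalIntegrable
    (continuous_finset_sum _ fun m _ => continuous_finset_sum _ fun k _ => hcont _ _) _ _)]
  rw [Finset.mul_sum]
  refine Finset.sum_congr rfl fun n hn => ?_
  rw [intervalIntegral.integral_finset_sum (fun m _ => Continuous.intervalIntegrable
    (continuous_finset_sum _ fun k _ => hcont _ _) _ _)]
  rw [Finset.mul_sum]
  refine Finset.sum_congr rfl fun m hm => ?_
  rw [intervalIntegral.integral_finset_sum (fun k _ => Continuous.intervalIntegrable
    (hcont _ _) _ _)]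
  have hterm : ∀ k ∈ K, (∫ θ in (0:ℝ)..(2*Real.pi),
      ((a k : ℂ) * ((starRingEnd ℂ) (x n) * x m)) * Complex.exp ((k - n + m : ℤ)*θ*Complex.I))
      = if k = (n:ℤ) - m then ((a k : ℂ) * ((starRingEnd ℂ) (x n) * x m)) * (2*Real.pi : ℂ)
        else 0 := by
    intro k _
    rw [intervalIntegral.integral_const_mul, integral_exp_int]
    by_cases hkk : k - (n:ℤ) + m = 0
    · rw [if_pos hkk, if_pos (by omega)]
    · rw [if_neg hkk, if_neg (by omega), mul_zero]
  rw [Finset.sum_congr rfl hterm, Finset.sum_ite_eq' K ((n:ℤ) - m)]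
  by_cases hv : (n:ℤ) - m ∈ K
  · rw [if_pos hv]; ring
  · rw [if_neg hv, haK _ hv]
    simp

private lemma symbol_re (a : ℤ → ℝ) (ha : (Function.support a).Finite)
    (hsymm : ∀ k : ℤ, a (-k) = a k) (θ : ℝ) :
    (∑ k ∈ ha.toFinset, (a k : ℂ) * Complex.exp (k*θ*Complex.I)).re
      = a 0 + 2 * ∑ᶠ k : ℕ, a ((k : ℤ) + 1) * Real.cos (((k : ℝ) + 1) * θ) := by
  classical
  set K := ha.toFinset with hKdef
  have hmemK : ∀ k : ℤ, k ∈ K ↔ a k ≠ 0 := fun k => ha.mem_toFinset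
  set g : ℤ → ℝ := fun k => a k * Real.cos ((k:ℝ) * θ) with hgdef
  have hre : (∑ k ∈ K, (a k : ℂ) * Complex.exp (k*θ*Complex.I)).re = ∑ k ∈ K, g k := by
    rw [Complex.re_sum]
    refine Finset.sum_congr rfl fun k _ => ?_
    rw [show (k:ℂ)*θ*Complex.I = (((k:ℝ)*θ : ℝ):ℂ)*Complex.I by push_cast; ring]
    rw [Complex.re_ofReal_mul, Complex.exp_ofReal_mul_I_re]
  rw [hre]
  -- split the sum
  have hsplit1 : ∑ k ∈ K, g k
      = ∑ k ∈ K.filter (fun k => 0 < k), g k + ∑ k ∈ K.filter (fun k => ¬ 0 < k), g k :=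
    (Finset.sum_filter_add_sum_filter_not K _ g).symm
  have hsplit2 : ∑ k ∈ K.filter (fun k => ¬ 0 < k), g k
      = ∑ k ∈ (K.filter (fun k => ¬ 0 < k)).filter (fun k => k = 0), g k
        + ∑ k ∈ (K.filter (fun k => ¬ 0 < k)).filter (fun k => ¬ k = 0), g k :=
    (Finset.sum_filter_add_sum_filter_not _ _ g).symm
  have hzero : ∑ k ∈ (K.filter (fun k => ¬ 0 < k)).filter (fun k => k = 0), g k = a 0 := by
    rw [Finset.filter_filter]
    by_cases h0 : (0:ℤ) ∈ K
    · have : K.filter (fun k => ¬ 0 < k ∧ k = 0) = {0} := by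
        ext k
        simp only [Finset.mem_filter, Finset.mem_singleton]
        constructor
        · rintro ⟨_, _, rfl⟩; rfl
        · rintro rfl; exact ⟨h0, by omega, rfl⟩
      rw [this, Finset.sum_singleton, hgdef]
      simp
    · have h0' : a 0 = 0 := by
        by_contra h; exact h0 ((hmemK 0).2 h)
      have : K.filter (fun k => ¬ 0 < k ∧ k = 0) = ∅ := by
        ext k
        simp only [Finset.mem_filter, Finset.notMem_empty, iff_false]
        rintro ⟨hk, _, rfl⟩; exact h0 hk
      rw [this, Finset.sum_empty, h0']
  have hnegset : (K.filter (fun k => ¬ 0 < k)).filter (fun k => ¬ k = 0)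
      = K.filter (fun k => k < 0) := by
    rw [Finset.filter_filter]
    apply Finset.filter_congr
    intro k _
    constructor
    · rintro ⟨h1, h2⟩; omega
    · intro h; constructor <;> omega
  have hneg : ∑ k ∈ K.filter (fun k => k < 0), g k
      = ∑ k ∈ K.filter (fun k => 0 < k), g k := by
    refine Finset.sum_nbij' (i := fun k => -k) (j := fun k => -k) ?_ ?_ ?_ ?_ ?_
    · intro k hk
      simp only [Finset.mem_filter, hmemK] at hk ⊢
      exact ⟨by rw [hsymm]; exact hk.1, by omega⟩
    · intro k hk
      simp only [Finset.mem_filter, hmemK] at hk ⊢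
      exact ⟨by rw [hsymm]; exact hk.1, by omega⟩
    · intro k _; ring
    · intro k _; ring
    · intro k _
      simp only [hgdef]
      rw [hsymm]
      push_cast
      rw [neg_mul, Real.cos_neg]
  -- the finsum
  have hfinsum : ∑ᶠ k : ℕ, a ((k : ℤ) + 1) * Real.cos (((k : ℝ) + 1) * θ)
      = ∑ k ∈ K.filter (fun k => 0 < k), g k := by
    set t : Finset ℕ := (K.filter (fun k => 0 < k)).image (fun k => k.toNat - 1) with htdef
    have hsupp : Function.support (fun j : ℕ => a ((j : ℤ) + 1) * Real.cos (((j : ℝ) + 1) * θ))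
        ⊆ ↑t := by
      intro j hj
      have haj : a ((j:ℤ) + 1) ≠ 0 := by
        intro h
        apply hj
        simp [Function.mem_support, h] at hj ⊢
      simp only [htdef, Finset.coe_image, Set.mem_image, Finset.mem_coe, Finset.mem_filter,
        hmemK]
      exact ⟨(j:ℤ) + 1, ⟨haj, by omega⟩, by omega⟩
    rw [finsum_eq_sum_of_support_subset _ hsupp]
    rw [Finset.sum_image]
    · refine Finset.sum_congr rfl fun k hk => ?_
      simp only [Finset.mem_filter] at hk
      have hk1 : ((k.toNat - 1 : ℕ) : ℤ) + 1 = k := by omega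
      have hk2 : ((k.toNat - 1 : ℕ) : ℝ) + 1 = (k:ℝ) := by exact_mod_cast congrArg (fun z : ℤ => (z : ℝ)) hk1
      rw [hk1, hk2]
    · intro p hp q hq h
      simp only [Finset.mem_coe, Finset.mem_filter] at hp hq h
      omega
  rw [hsplit1, hsplit2, hzero, hnegset, hneg, hfinsum]
  ring

private lemma coercive_finset (a : ℤ → ℝ) (ha : (Function.support a).Finite)
    (hsymm : ∀ k : ℤ, a (-k) = a k) (c : ℝ)
    (hsymb : ∀ θ : ℝ, c ≤ a 0 + 2 * ∑ᶠ k : ℕ, a ((k : ℤ) + 1) * Real.cos (((k : ℝ) + 1) * θ))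
    (s : Finset ℕ) (x : ℕ → ℂ) :
    c * ∑ n ∈ s, Complex.normSq (x n)
      ≤ (∑ n ∈ s, ∑ m ∈ s, (a ((m:ℤ) - n) : ℂ) * ((starRingEnd ℂ) (x n) * x m)).re := by
  classical
  set K := ha.toFinset with hKdef
  have haK : ∀ k ∉ K, a k = 0 := by
    intro k hk
    by_contra h
    exact hk (ha.mem_toFinset.2 h)
  set F : ℝ → ℂ := fun θ => ∑ n ∈ s, x n * Complex.exp (n*θ*Complex.I) with hFdef
  set G : ℝ → ℂ := fun θ => ∑ k ∈ K, (a k : ℂ) * Complex.exp (k*θ*Complex.I) with hGdef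
  have hFcont : Continuous F := continuous_finset_sum _ fun n _ => by fun_prop
  have hGcont : Continuous G := continuous_finset_sum _ fun k _ => by fun_prop
  -- identity 1
  have hI1 : ∫ θ in (0:ℝ)..(2*Real.pi), G θ * ((starRingEnd ℂ) (F θ) * F θ)
      = (2*Real.pi : ℂ) * ∑ n ∈ s, ∑ m ∈ s,
          (a ((n:ℤ) - m) : ℂ) * ((starRingEnd ℂ) (x n) * x m) :=
    integral_symbol_mul a K haK s x
  -- identity 2 : Parseval for F itself
  have hI2 : ∫ θ in (0:ℝ)..(2*Real.pi), (starRingEnd ℂ) (F θ) * F θ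
      = (2*Real.pi : ℂ) * ∑ n ∈ s, (starRingEnd ℂ) (x n) * x n := by
    have := integral_symbol_mul (fun k => if k = 0 then (1:ℝ) else 0) {(0:ℤ)}
      (by intro k hk; simp at hk; simp [hk]) s x
    simp only [Finset.sum_singleton, Int.cast_zero, zero_mul, Complex.exp_zero, mul_one,
      eq_self_iff_true, ite_true, Complex.ofReal_one, one_mul] at this
    rw [this]
    congr 1
    refine Finset.sum_congr rfl fun n hn => ?_
    have : ∀ m ∈ s, ((if (n:ℤ) - m = 0 then (1:ℝ) else 0 : ℝ) : ℂ) * ((starRingEnd ℂ) (x n) * x m)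
        = if m = n then (starRingEnd ℂ) (x n) * x m else 0 := by
      intro m _
      by_cases h : m = n
      · subst h; rw [if_pos (by omega), if_pos rfl]; simp
      · rw [if_neg (by omega), if_neg h]; simp
    rw [Finset.sum_congr rfl this, Finset.sum_ite_eq' s n, if_pos hn]
  -- real parts
  have hint1 : IntervalIntegrable (fun θ => G θ * ((starRingEnd ℂ) (F θ) * F θ))
      MeasureTheory.volume 0 (2*Real.pi) :=
    (hGcont.mul ((Complex.continuous_conj.comp hFcont).mul hFcont)).intervalIntegrable _ _
  have hint2 : IntervalIntegrable (fun θ => (starRingEnd ℂ) (F θ) * F θ)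
      MeasureTheory.volume 0 (2*Real.pi) :=
    ((Complex.continuous_conj.comp hFcont).mul hFcont).intervalIntegrable _ _
  have hre1 : ∫ θ in (0:ℝ)..(2*Real.pi), (G θ).re * Complex.normSq (F θ)
      = (2*Real.pi) * (∑ n ∈ s, ∑ m ∈ s,
          (a ((n:ℤ) - m) : ℂ) * ((starRingEnd ℂ) (x n) * x m)).re := by
    have h := Complex.reCLM.intervalIntegral_comp_comm hint1
    rw [hI1] at h
    simp only [Complex.reCLM_apply] at h
    have hptw : ∀ θ : ℝ, (G θ * ((starRingEnd ℂ) (F θ) * F θ)).re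
        = (G θ).re * Complex.normSq (F θ) := by
      intro θ
      rw [show (starRingEnd ℂ) (F θ) * F θ = ((Complex.normSq (F θ) : ℝ) : ℂ) from
          Complex.normSq_eq_conj_mul_self.symm, mul_comm, Complex.re_ofReal_mul]
      ring
    simp only [hptw] at h
    rw [h, show ((2:ℂ) * (Real.pi:ℂ)) = ((2*Real.pi:ℝ):ℂ) by push_cast; ring,
      Complex.re_ofReal_mul]
  have hre2 : ∫ θ in (0:ℝ)..(2*Real.pi), Complex.normSq (F θ)
      = (2*Real.pi) * ∑ n ∈ s, Complex.normSq (x n) := by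
    have h := Complex.reCLM.intervalIntegral_comp_comm hint2
    rw [hI2] at h
    simp only [Complex.reCLM_apply] at h
    have hptw : ∀ θ : ℝ, ((starRingEnd ℂ) (F θ) * F θ).re = Complex.normSq (F θ) := by
      intro θ
      rw [show (starRingEnd ℂ) (F θ) * F θ = ((Complex.normSq (F θ) : ℝ) : ℂ) from
          Complex.normSq_eq_conj_mul_self.symm]
      simp
    simp only [hptw] at h
    rw [h, show ((2:ℂ) * (Real.pi:ℂ)) = ((2*Real.pi:ℝ):ℂ) by push_cast; ring,
      Complex.re_ofReal_mul]
    congr 1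
    rw [Complex.re_sum]
    refine Finset.sum_congr rfl fun n _ => ?_
    rw [show (starRingEnd ℂ) (x n) * x n = ((Complex.normSq (x n) : ℝ) : ℂ) from
        Complex.normSq_eq_conj_mul_self.symm]
    simp
  -- pointwise bound and monotonicity
  have hGre : ∀ θ : ℝ, c ≤ (G θ).re := by
    intro θ
    rw [hGdef, symbol_re a ha hsymm θ]
    exact hsymb θ
  have hmono : ∫ θ in (0:ℝ)..(2*Real.pi), c * Complex.normSq (F θ)
      ≤ ∫ θ in (0:ℝ)..(2*Real.pi), (G θ).re * Complex.normSq (F θ) := by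
    apply intervalIntegral.integral_mono_on (by positivity)
    · exact (continuous_const.mul (Complex.continuous_normSq.comp hFcont)).intervalIntegrable _ _
    · exact ((Complex.continuous_re.comp hGcont).mul
        (Complex.continuous_normSq.comp hFcont)).intervalIntegrable _ _
    · intro θ _
      exact mul_le_mul_of_nonneg_right (hGre θ) (Complex.normSq_nonneg _)
  rw [intervalIntegral.integral_const_mul, hre2, hre1] at hmono
  have h2pi : (0:ℝ) < 2*Real.pi := by positivity
  have hfin : c * ∑ n ∈ s, Complex.normSq (x n)
      ≤ (∑ n ∈ s, ∑ m ∈ s, (a ((n:ℤ) - m) : ℂ) * ((starRingEnd ℂ) (x n) * x m)).re := by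
    have h1 : 2*Real.pi * (c * ∑ n ∈ s, Complex.normSq (x n))
        ≤ 2*Real.pi * (∑ n ∈ s, ∑ m ∈ s,
            (a ((n:ℤ) - m) : ℂ) * ((starRingEnd ℂ) (x n) * x m)).re := by linarith
    exact le_of_mul_le_mul_left h1 h2pi
  -- convert a (n-m) to a (m-n)
  have hQ : (∑ n ∈ s, ∑ m ∈ s, (a ((n:ℤ) - m) : ℂ) * ((starRingEnd ℂ) (x n) * x m))
      = ∑ n ∈ s, ∑ m ∈ s, (a ((m:ℤ) - n) : ℂ) * ((starRingEnd ℂ) (x n) * x m) := by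
    refine Finset.sum_congr rfl fun n _ => Finset.sum_congr rfl fun m _ => ?_
    rw [show (n:ℤ) - m = -((m:ℤ) - n) by ring, hsymm]
  rw [hQ] at hfin
  exact hfin

end ToeplitzAux

open Complex Real Finset

set_option maxHeartbeats 1000000 in
/-- A banded self-adjoint Toeplitz operator on `ℓ²` whose (real) symbol
`a(0) + 2 Σ_{k≥1} a(k) cos(kθ)` is bounded below by `c > 0` is coercive and admits a
continuous two-sided inverse. -/
theorem toeplitz_coercive_invertible
    (a : ℤ → ℝ) (ha : (Function.support a).Finite)
    (hsymm : ∀ k : ℤ, a (-k) = a k)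
    (c : ℝ) (hc : 0 < c)
    (hsymb : ∀ θ : ℝ, c ≤ a 0 + 2 * ∑ᶠ k : ℕ, a ((k : ℤ) + 1) * Real.cos (((k : ℝ) + 1) * θ))
    (T : lp (fun _ : ℕ => ℂ) 2 →L[ℂ] lp (fun _ : ℕ => ℂ) 2)
    (hT : ∀ m n : ℕ, (T (lp.single 2 n 1)) m = (a ((m : ℤ) - (n : ℤ)) : ℂ)) :
    (∀ u : lp (fun _ : ℕ => ℂ) 2, c * ‖u‖ ^ 2 ≤ (⟪T u, u⟫).re) ∧
    (∃ S : lp (fun _ : ℕ => ℂ) 2 →L[ℂ] lp (fun _ : ℕ => ℂ) 2,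
      S.comp T = ContinuousLinearMap.id ℂ (lp (fun _ : ℕ => ℂ) 2) ∧
      T.comp S = ContinuousLinearMap.id ℂ (lp (fun _ : ℕ => ℂ) 2)) := by
  classical
  set V := lp (fun _ : ℕ => ℂ) 2 with hV
  -- Step A: coercivity on finitely supported elements
  have stepA : ∀ (u : V) (s : Finset ℕ),
      c * ‖∑ n ∈ s, lp.single 2 n (u n)‖ ^ 2
        ≤ (⟪T (∑ n ∈ s, lp.single 2 n (u n)), (∑ n ∈ s, lp.single 2 n (u n))⟫).re := by
    intro u s
    set us : V := ∑ n ∈ s, lp.single 2 n (u n) with husdef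
    have hsingle : ∀ n : ℕ, lp.single (E := fun _ : ℕ => ℂ) 2 n (u n) = u n • lp.single 2 n 1 := by
      intro n
      rw [← lp.single_smul]
      norm_num
    have hinner : ⟪T us, us⟫
        = ∑ n ∈ s, ∑ m ∈ s, (a ((m:ℤ) - n) : ℂ) * ((starRingEnd ℂ) (u n) * u m) := by
      rw [husdef, map_sum, sum_inner]
      refine Finset.sum_congr rfl fun n _ => ?_
      rw [inner_sum]
      refine Finset.sum_congr rfl fun m _ => ?_
      rw [hsingle n, map_smul, inner_smul_left, lp.inner_single_right]
      have : (T (lp.single 2 n 1)) m = ((a ((m:ℤ) - n) : ℝ) : ℂ) := hT m n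
      rw [this]
      simp only [RCLike.inner_apply, Complex.conj_ofReal]
      ring
    have hnorm : (‖us‖:ℝ) ^ 2 = ∑ n ∈ s, Complex.normSq (u n) := by
      have h1 : re ⟪us, us⟫ = ‖us‖ ^ 2 := @inner_self_eq_norm_sq ℂ _ _ _ _ us
      have h2 : ⟪us, us⟫ = ∑ n ∈ s, (starRingEnd ℂ) (u n) * u n := by
        rw [husdef, sum_inner]
        refine Finset.sum_congr rfl fun n hn => ?_
        rw [inner_sum]
        have h3 : ∀ m ∈ s, ⟪lp.single (E := fun _ : ℕ => ℂ) 2 n (u n), lp.single 2 m (u m)⟫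
            = if m = n then (starRingEnd ℂ) (u n) * u n else 0 := by
          intro m _
          rw [lp.inner_single_left]
          by_cases h : m = n
          · subst h
            rw [if_pos rfl, lp.single_apply_self, RCLike.inner_apply, mul_comm]
          · rw [if_neg h, lp.single_apply_ne 2 m _ (fun hh => h hh.symm), RCLike.inner_apply,
              zero_mul]
        rw [Finset.sum_congr rfl h3, Finset.sum_ite_eq' s n, if_pos hn]
      rw [← h1, h2, Complex.re_sum]
      refine Finset.sum_congr rfl fun n _ => ?_
      rw [show (starRingEnd ℂ) (u n) * u n = ((Complex.normSq (u n) : ℝ) : ℂ) from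
          Complex.normSq_eq_conj_mul_self.symm]
      simp
    have := coercive_finset a ha hsymm c hsymb s (fun n => u n)
    rw [← hinner] at this
    rw [hnorm]
    exact this
  -- Step B: coercivity everywhere by density
  have hcoer : ∀ u : V, c * ‖u‖ ^ 2 ≤ (⟪T u, u⟫).re := by
    intro u
    have hclosed : IsClosed {v : V | c * ‖v‖ ^ 2 ≤ (⟪T v, v⟫).re} := by
      apply isClosed_le
      · exact (continuous_const.mul ((continuous_norm).pow 2))
      · exact Complex.continuous_re.comp (T.continuous.inner continuous_id)
    have hsum : HasSum (fun n : ℕ => lp.single 2 n (u n)) u := lp.hasSum_single (by norm_num) u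
    exact hclosed.mem_of_tendsto hsum (Filter.Eventually.of_forall fun s => stepA u s)
  refine ⟨hcoer, ?_⟩
  -- Step C: invertibility
  have hlow : ∀ u : V, c * ‖u‖ ≤ ‖T u‖ := by
    intro u
    rcases eq_or_ne u 0 with rfl | hu
    · simp
    · have h1 : c * ‖u‖ ^ 2 ≤ (⟪T u, u⟫).re := hcoer u
      have h2 : (⟪T u, u⟫).re ≤ ‖T u‖ * ‖u‖ := by
        calc (⟪T u, u⟫).re ≤ ‖(⟪T u, u⟫ : ℂ)‖ := Complex.re_le_norm _
          _ ≤ ‖T u‖ * ‖u‖ := norm_inner_le_norm _ _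
      have hun : 0 < ‖u‖ := norm_pos_iff.2 hu
      have := h1.trans h2
      rw [pow_two] at this
      nlinarith
  have hker : LinearMap.ker (T : V →ₗ[ℂ] V) = ⊥ := by
    rw [LinearMap.ker_eq_bot']
    intro u hu
    have := hlow u
    rw [show T u = 0 from hu, norm_zero] at this
    have : ‖u‖ ≤ 0 := by nlinarith [norm_nonneg u]
    simpa [norm_le_zero_iff] using this
  have hanti : AntilipschitzWith (⟨c, hc.le⟩ : NNReal)⁻¹ T := by
    apply ContinuousLinearMap.antilipschitz_of_bound
    intro u
    have h := hlow u
    show ‖u‖ ≤ (c:ℝ)⁻¹ * ‖T u‖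
    calc ‖u‖ = c⁻¹ * (c * ‖u‖) := by field_simp
      _ ≤ c⁻¹ * ‖T u‖ := mul_le_mul_of_nonneg_left h (by positivity)
  have hclosedrange : IsClosed (Set.range T : Set V) :=
    hanti.isClosed_range T.uniformContinuous
  have hrange : LinearMap.range (T : V →ₗ[ℂ] V) = ⊤ := by
    have hcr : IsClosed ((LinearMap.range (T : V →ₗ[ℂ] V) : Submodule ℂ V) : Set V) := by
      have hs : ((LinearMap.range (T : V →ₗ[ℂ] V) : Submodule ℂ V) : Set V) = Set.range T := by
        ext v
        simp [LinearMap.mem_range, Set.mem_range]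
      rw [hs]
      exact hclosedrange
    haveI : CompleteSpace (LinearMap.range (T : V →ₗ[ℂ] V) : Submodule ℂ V) := hcr.completeSpace_coe
    rw [← Submodule.orthogonal_eq_bot_iff]
    rw [Submodule.eq_bot_iff]
    intro v hv
    have h0 : ⟪T v, v⟫ = 0 :=
      (Submodule.mem_orthogonal _ v).1 hv (T v) (LinearMap.mem_range.2 ⟨v, rfl⟩)
    have := hcoer v
    rw [h0] at this
    simp only [Complex.zero_re] at this
    have : ‖v‖ ^ 2 ≤ 0 := by nlinarith
    have : ‖v‖ = 0 := by nlinarith [norm_nonneg v, sq_nonneg ‖v‖]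
    simpa [norm_eq_zero] using this
  set e := ContinuousLinearEquiv.ofBijective T hker hrange with hedef
  refine ⟨(e.symm : V →L[ℂ] V), ?_, ?_⟩
  · refine ContinuousLinearMap.ext fun u => ?_
    simp only [ContinuousLinearMap.coe_comp', Function.comp_apply,
      ContinuousLinearMap.coe_id', id_eq, ContinuousLinearEquiv.coe_coe]
    exact ContinuousLinearEquiv.ofBijective_symm_apply_apply T hker hrange u
  · refine ContinuousLinearMap.ext fun u => ?_
    simp only [ContinuousLinearMap.coe_comp', Function.comp_apply,
      ContinuousLinearMap.coe_id', id_eq, ContinuousLinearEquiv.coe_coe]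
    exact ContinuousLinearEquiv.ofBijective_apply_symm_apply T hker hrange u
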